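/- Let n ≥ 2 and let M_n denote the C*-algebra of n×n complex matrices. Then Gen_2(M_n)_sa is dense in (M_n)²_sa, while Gen_1(M_n)_sa is empty; hence gr(M_n) = 1. -/

import Mathlib

section Helpers

open Matrix

lemma myEqTop {n : ℕ} (S : NonUnitalStarSubalgebra ℂ (Matrix (Fin n) (Fin n) ℂ))
    (h : ∀ x, x ∈ S) : S = ⊤ := by
  letI cl : CompleteLattice (NonUnitalStarSubalgebra ℂ (Matrix (Fin n) (Fin n) ℂ)) := inferInstance
  exact top_unique fun x _ => h x

noncomputable def conjHom {n : ℕ} (U : Matrix (Fin n) (Fin n) ℂ)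
    (hU : U ∈ Matrix.unitaryGroup (Fin n) ℂ) :
    Matrix (Fin n) (Fin n) ℂ →⋆ₙₐ[ℂ] Matrix (Fin n) (Fin n) ℂ where
  toFun x := U * x * star U
  map_smul' r x := by simp [Matrix.smul_mul, Matrix.mul_smul]
  map_zero' := by simp
  map_add' x y := by noncomm_ring
  map_mul' x y := by
    have h : star U * U = 1 := (Matrix.mem_unitaryGroup_iff').mp hU
    calc U * (x * y) * star U = (U * x) * (star U * U) * (y * star U) := by rw [h]; noncomm_ring
    _ = (U * x * star U) * (U * y * star U) := by noncomm_ring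
  map_star' x := by
    simp only [StarMul.star_mul, star_star]
    noncomm_ring

lemma adjoin_conj {n : ℕ} (U : Matrix (Fin n) (Fin n) ℂ)
    (hU : U ∈ Matrix.unitaryGroup (Fin n) ℂ) (d B : Matrix (Fin n) (Fin n) ℂ)
    (h : NonUnitalStarAlgebra.adjoin ℂ {d, B} = ⊤) :
    NonUnitalStarAlgebra.adjoin ℂ {U * d * star U, U * B * star U} = ⊤ := by
  have hmap := NonUnitalStarAlgHom.map_adjoin (R := ℂ) (conjHom U hU) {d, B}
  rw [h, Set.image_pair] at hmap
  have hc : ∀ x, conjHom U hU x = U * x * star U := fun _ => rfl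
  rw [hc, hc] at hmap
  rw [← hmap]
  apply myEqTop
  intro x
  rw [NonUnitalStarSubalgebra.mem_map]
  refine ⟨star U * x * U, trivial, ?_⟩
  have h1 : U * star U = 1 := (Matrix.mem_unitaryGroup_iff).mp hU
  show U * (star U * x * U) * star U = x
  calc U * (star U * x * U) * star U = (U * star U) * x * (U * star U) := by noncomm_ring
  _ = x := by rw [h1]; noncomm_ring

lemma pow_succ_mem {n : ℕ} (S : NonUnitalStarSubalgebra ℂ (Matrix (Fin n) (Fin n) ℂ))
    {d : Matrix (Fin n) (Fin n) ℂ} (hd : d ∈ S) (k : ℕ) : d ^ (k + 1) ∈ S := by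
  induction k with
  | zero => simpa using hd
  | succ m ih => rw [pow_succ]; exact mul_mem ih hd

lemma diag_single_mem {n : ℕ} (μ : Fin n → ℂ) (hinj : Function.Injective μ)
    (h0 : ∀ i, μ i ≠ 0) (S : NonUnitalStarSubalgebra ℂ (Matrix (Fin n) (Fin n) ℂ))
    (hd : Matrix.diagonal μ ∈ S) (i0 : Fin n) :
    Matrix.single i0 i0 (1 : ℂ) ∈ S := by
  classical
  set N : Matrix (Fin n) (Fin n) ℂ := Matrix.diagonal μ * Matrix.vandermonde μ with hN
  have hNapp : ∀ i k, N i k = μ i ^ ((k : ℕ) + 1) := by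
    intro i k
    rw [hN, Matrix.diagonal_mul, Matrix.vandermonde_apply, pow_succ']
  have hdet : IsUnit N.det := by
    rw [isUnit_iff_ne_zero, hN, Matrix.det_mul, Matrix.det_diagonal, Matrix.det_vandermonde]
    refine mul_ne_zero (Finset.prod_ne_zero_iff.mpr fun i _ => h0 i) ?_
    refine Finset.prod_ne_zero_iff.mpr fun i _ => Finset.prod_ne_zero_iff.mpr fun j hj => ?_
    rw [Finset.mem_Ioi] at hj
    exact sub_ne_zero_of_ne fun h => absurd (hinj h).symm (ne_of_lt hj)
  set c : Fin n → ℂ := N⁻¹ *ᵥ Pi.single i0 1 with hc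
  have hsol : N *ᵥ c = Pi.single i0 1 := by
    rw [hc, Matrix.mulVec_mulVec, Matrix.mul_nonsing_inv _ hdet, Matrix.one_mulVec]
  have hsum : ∀ i, (∑ k : Fin n, c k * μ i ^ ((k : ℕ) + 1))
      = (Pi.single i0 (1:ℂ) : Fin n → ℂ) i := by
    intro i
    have := congrFun hsol i
    rw [Matrix.mulVec, dotProduct] at this
    simp only [hNapp] at this
    rw [← this]
    exact Finset.sum_congr rfl fun k _ => mul_comm _ _
  have key : Matrix.single i0 i0 (1 : ℂ)
      = ∑ k : Fin n, c k • Matrix.diagonal μ ^ ((k : ℕ) + 1) := by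
    ext i j
    rw [Matrix.sum_apply]
    simp only [Matrix.diagonal_pow, Matrix.smul_apply, Matrix.diagonal_apply, Pi.pow_apply,
      smul_eq_mul, mul_ite, mul_zero]
    by_cases hij : i = j
    · subst hij
      simp only [eq_self_iff_true, if_true]
      rw [hsum i]
      by_cases h : i0 = i
      · subst h; simp [Matrix.single]
      · simp [Matrix.single, h, Pi.single_eq_of_ne (Ne.symm h)]
    · simp only [if_neg hij, Finset.sum_const_zero, Matrix.single, Matrix.of_apply]
      rw [if_neg]
      rintro ⟨rfl, rfl⟩
      exact hij rfl
  rw [key]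
  exact sum_mem fun k _ => SMulMemClass.smul_mem _ (pow_succ_mem S hd _)

lemma star_stdBasisMatrix' {n : ℕ} (i j : Fin n) :
    star (Matrix.single i j (1:ℂ)) = Matrix.single j i (1:ℂ) := by
  ext a b
  simp only [Matrix.star_apply, Matrix.single, Matrix.of_apply]
  split_ifs with h1 h2 h2 <;> simp_all [And.comm]

lemma sandwich {n : ℕ} (i j : Fin n) (X : Matrix (Fin n) (Fin n) ℂ) :
    Matrix.single i i (1:ℂ) * X * Matrix.single j j (1:ℂ)
      = Matrix.single i j (X i j) := by
  ext a b
  by_cases hb : b = j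
  · subst hb
    rw [Matrix.mul_single_apply_same]
    by_cases ha : a = i
    · subst ha
      rw [Matrix.single_mul_apply_same]
      simp [Matrix.single]
    · rw [Matrix.single_mul_apply_of_ne _ _ _ _ _ ha]
      simp [Matrix.single, Ne.symm ha]
  · rw [Matrix.mul_single_apply_of_ne _ _ _ _ _ hb]
    simp [Matrix.single, Ne.symm hb]

lemma core_gen {n : ℕ} (μ : Fin n → ℂ) (hinj : Function.Injective μ)
    (h0 : ∀ i, μ i ≠ 0) (B : Matrix (Fin n) (Fin n) ℂ)
    (hB : ∀ (m : ℕ) (h : m + 1 < n), B ⟨m, by omega⟩ ⟨m + 1, h⟩ ≠ 0) :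
    NonUnitalStarAlgebra.adjoin ℂ {Matrix.diagonal μ, B} = ⊤ := by
  rcases Nat.eq_zero_or_pos n with hn | hn
  · subst hn
    apply myEqTop
    intro x
    have : x = 0 := Subsingleton.elim x 0
    rw [this]; exact zero_mem _
  set S := NonUnitalStarAlgebra.adjoin ℂ {Matrix.diagonal μ, B} with hS
  have hdmem : Matrix.diagonal μ ∈ S :=
    NonUnitalStarAlgebra.subset_adjoin ℂ _ (Set.mem_insert _ _)
  have hBmem : B ∈ S :=
    NonUnitalStarAlgebra.subset_adjoin ℂ _ (Set.mem_insert_of_mem _ rfl)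
  have hdiagS : ∀ i : Fin n, Matrix.single i i (1:ℂ) ∈ S :=
    diag_single_mem μ hinj h0 S hdmem
  have hstep : ∀ (m : ℕ) (h : m + 1 < n),
      Matrix.single (⟨m, by omega⟩ : Fin n) ⟨m + 1, h⟩ (1:ℂ) ∈ S := by
    intro m h
    have h1 := mul_mem (mul_mem (hdiagS ⟨m, by omega⟩) hBmem) (hdiagS ⟨m + 1, h⟩)
    rw [sandwich] at h1
    have h2 := SMulMemClass.smul_mem (B ⟨m, by omega⟩ ⟨m + 1, h⟩)⁻¹ h1
    rwa [Matrix.smul_single, smul_eq_mul, inv_mul_cancel₀ (hB m h)] at h2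
  have hE0 : ∀ (j : ℕ) (h : j < n),
      Matrix.single (⟨0, hn⟩ : Fin n) ⟨j, h⟩ (1:ℂ) ∈ S := by
    intro j
    induction j with
    | zero => intro h; exact hdiagS ⟨0, hn⟩
    | succ m ih =>
      intro h
      have h1 := mul_mem (ih (by omega)) (hstep m h)
      rwa [Matrix.single_mul_single_same, one_mul] at h1
  have hEij : ∀ i j : Fin n, Matrix.single i j (1:ℂ) ∈ S := by
    intro i j
    have hi : Matrix.single i (⟨0, hn⟩ : Fin n) (1:ℂ) ∈ S := by
      have := star_mem (hE0 i.1 i.2)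
      rwa [show (⟨i.1, i.2⟩ : Fin n) = i from rfl, star_stdBasisMatrix'] at this
    have h1 := mul_mem hi (hE0 j.1 j.2)
    rwa [Matrix.single_mul_single_same, one_mul,
      show (⟨j.1, j.2⟩ : Fin n) = j from rfl] at h1
  apply myEqTop
  intro x
  rw [Matrix.matrix_eq_sum_single x]
  refine sum_mem fun i _ => sum_mem fun j _ => ?_
  have : Matrix.single i j (x i j) = x i j • Matrix.single i j (1:ℂ) := by
    rw [Matrix.smul_single, smul_eq_mul, mul_one]
  rw [this]
  exact SMulMemClass.smul_mem _ (hEij i j)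

lemma conj_star_eq {n : ℕ} (U X : Matrix (Fin n) (Fin n) ℂ) :
    star (U * X * star U) = U * star X * star U := by
  simp [StarMul.star_mul, star_star, mul_assoc]

lemma range_fin2 {α : Type*} (x y : α) : Set.range ![x, y] = {x, y} := by
  ext z
  simp [Fin.exists_fin_two]
  tauto

lemma top_closure_eq {n : ℕ} :
    (⊤ : NonUnitalStarSubalgebra ℂ (Matrix (Fin n) (Fin n) ℂ)).topologicalClosure = ⊤ := by
  apply myEqTop
  intro x
  exact (⊤ : NonUnitalStarSubalgebra ℂ (Matrix (Fin n) (Fin n) ℂ)).le_topologicalClosure trivial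

end Helpers

def MatGenerates {n k : ℕ} (a : Fin k → Matrix (Fin n) (Fin n) ℂ) : Prop :=
  (NonUnitalStarAlgebra.adjoin ℂ (Set.range a)).topologicalClosure = ⊤

theorem gr_matrixAlgebra {n : ℕ} (hn : 2 ≤ n) :
    (∀ a : Fin 2 → Matrix (Fin n) (Fin n) ℂ, (∀ i, IsSelfAdjoint (a i)) →
      a ∈ closure {b : Fin 2 → Matrix (Fin n) (Fin n) ℂ |
        (∀ i, IsSelfAdjoint (b i)) ∧ MatGenerates b}) ∧
    {a : Fin 1 → Matrix (Fin n) (Fin n) ℂ | (∀ i, IsSelfAdjoint (a i)) ∧ MatGenerates a} = ∅ := by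
  constructor
  · -- density of generating pairs
    intro a hsa
    have hA : (a 0).IsHermitian := hsa 0
    set U : Matrix (Fin n) (Fin n) ℂ := (hA.eigenvectorUnitary : Matrix (Fin n) (Fin n) ℂ)
      with hUdef
    have hUmem : U ∈ Matrix.unitaryGroup (Fin n) ℂ := SetLike.coe_mem _
    have hU1 : U * star U = 1 := (Matrix.mem_unitaryGroup_iff).mp hUmem
    have hU1' : star U * U = 1 := (Matrix.mem_unitaryGroup_iff').mp hUmem
    set lam : Fin n → ℝ := hA.eigenvalues with hlam
    have hspec : a 0 = U * Matrix.diagonal (fun i => ((lam i : ℝ) : ℂ)) * star U :=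
      hA.spectral_theorem
    set dC : Matrix (Fin n) (Fin n) ℂ := Matrix.diagonal (fun i => ((i : ℕ) + 1 : ℂ)) with hdC
    set C : Matrix (Fin n) (Fin n) ℂ := U * dC * star U with hC
    set T0 : Matrix (Fin n) (Fin n) ℂ :=
      Matrix.of (fun i j => if (i : ℕ) + 1 = (j : ℕ) ∨ (j : ℕ) + 1 = (i : ℕ) then (1:ℂ) else 0)
      with hT0
    set D : Matrix (Fin n) (Fin n) ℂ := U * T0 * star U with hD
    set B0 : Matrix (Fin n) (Fin n) ℂ := star U * a 1 * U with hB0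
    have ha1 : a 1 = U * B0 * star U := by
      rw [hB0]
      calc a 1 = (U * star U) * a 1 * (U * star U) := by rw [hU1]; noncomm_ring
      _ = U * (star U * a 1 * U) * star U := by noncomm_ring
    -- key identity (1)
    have key1 : ∀ t : ℝ, a 0 + (t:ℂ) • C
        = U * Matrix.diagonal (fun i => ((lam i + t * ((i : ℕ) + 1) : ℝ) : ℂ)) * star U := by
      intro t
      have hsplit : Matrix.diagonal (fun i => ((lam i + t * ((i : ℕ) + 1) : ℝ) : ℂ))
          = Matrix.diagonal (fun i => ((lam i : ℝ) : ℂ)) + (t:ℂ) • dC := by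
        ext i j
        rcases eq_or_ne i j with rfl | h
        · simp only [hdC, Matrix.add_apply, Matrix.smul_apply, Matrix.diagonal_apply_eq,
            smul_eq_mul]
          push_cast
          ring
        · simp [hdC, Matrix.diagonal_apply_ne _ h]
      rw [hsplit, mul_add, add_mul, ← hspec, Matrix.mul_smul, Matrix.smul_mul]
    -- key identity (2)
    have key2 : ∀ t : ℝ, a 1 + (t:ℂ) • D = U * (B0 + (t:ℂ) • T0) * star U := by
      intro t
      rw [mul_add, add_mul, ← ha1, Matrix.mul_smul, Matrix.smul_mul]
    -- self-adjointness of the perturbations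
    have hdCsa : star dC = dC := by
      rw [hdC]
      ext i j
      rw [Matrix.star_apply]
      rcases eq_or_ne i j with rfl | h
      · simp
      · simp [Matrix.diagonal_apply_ne, h, Ne.symm h]
    have hCsa : star C = C := by rw [hC, conj_star_eq, hdCsa]
    have hT0sa : star T0 = T0 := by
      rw [Matrix.star_eq_conjTranspose]
      ext i j
      rw [Matrix.conjTranspose_apply]
      simp only [hT0, Matrix.of_apply]
      split_ifs with h1 h2 h2
      · simp
      · exact absurd h1.symm h2
      · exact absurd h2.symm h1
      · simp
    have hDsa : star D = D := by rw [hD, conj_star_eq, hT0sa]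
    have htreal : ∀ t : ℝ, _root_.IsSelfAdjoint ((t:ℂ)) := fun t => Complex.conj_ofReal t
    have hsa0 : ∀ t : ℝ, _root_.IsSelfAdjoint (a 0 + (t:ℂ) • C) := fun t =>
      (hsa 0).add ((htreal t).smul hCsa)
    have hsa1 : ∀ t : ℝ, _root_.IsSelfAdjoint (a 1 + (t:ℂ) • D) := fun t =>
      (hsa 1).add ((htreal t).smul hDsa)
    -- bad parameters form a finite set
    set Bad : Set ℝ :=
      (⋃ p : Fin n × Fin n, {t : ℝ | p.1 ≠ p.2 ∧
        lam p.1 + t * ((p.1 : ℕ) + 1) = lam p.2 + t * ((p.2 : ℕ) + 1)})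
      ∪ (⋃ i : Fin n, {t : ℝ | lam i + t * ((i : ℕ) + 1) = 0})
      ∪ (⋃ p : Fin n × Fin n, {t : ℝ | B0 p.1 p.2 + (t:ℂ) = 0}) with hBad
    have hBadFin : Bad.Finite := by
      refine Set.Finite.union (Set.Finite.union ?_ ?_) ?_
      · refine Set.finite_iUnion fun p => Set.Subsingleton.finite ?_
        rintro t1 ⟨hne, h1⟩ t2 ⟨-, h2⟩
        have hij : ((p.1 : ℕ) : ℝ) ≠ ((p.2 : ℕ) : ℝ) := by
          intro h
          exact hne (Fin.ext (by exact_mod_cast h))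
        have e1 : t1 * (((p.1 : ℕ) : ℝ) - ((p.2 : ℕ) : ℝ)) = lam p.2 - lam p.1 := by
          linear_combination h1
        have e2 : t2 * (((p.1 : ℕ) : ℝ) - ((p.2 : ℕ) : ℝ)) = lam p.2 - lam p.1 := by
          linear_combination h2
        exact mul_right_cancel₀ (sub_ne_zero_of_ne hij) (e1.trans e2.symm)
      · refine Set.finite_iUnion fun i => Set.Subsingleton.finite ?_
        intro t1 h1 t2 h2
        simp only [Set.mem_setOf_eq] at h1 h2
        have hpos : (0:ℝ) < ((i : ℕ) : ℝ) + 1 := by positivity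
        have e : t1 * (((i : ℕ) : ℝ) + 1) = t2 * (((i : ℕ) : ℝ) + 1) := by
          linear_combination h1 - h2
        exact mul_right_cancel₀ (ne_of_gt hpos) e
      · refine Set.finite_iUnion fun p => Set.Subsingleton.finite ?_
        intro t1 h1 t2 h2
        simp only [Set.mem_setOf_eq] at h1 h2
        have : (t1 : ℂ) = (t2 : ℂ) := by linear_combination h1 - h2
        exact_mod_cast this
    -- choose good parameters
    have hstep : ∀ m : ℕ, ∃ t : ℝ, t ∈ Set.Ioo (0:ℝ) (1 / ((m:ℝ) + 1)) \ Bad := by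
      intro m
      exact ((Set.Ioo_infinite (by positivity)).diff hBadFin).nonempty
    choose ts hts using hstep
    have hts0 : Filter.Tendsto ts Filter.atTop (nhds 0) := by
      refine squeeze_zero (fun m => ((hts m).1.1).le) (fun m => ((hts m).1.2).le) ?_
      exact tendsto_one_div_add_atTop_nhds_zero_nat
    -- the approximating sequence
    set seq : ℕ → (Fin 2 → Matrix (Fin n) (Fin n) ℂ) :=
      fun m => ![a 0 + (ts m : ℂ) • C, a 1 + (ts m : ℂ) • D] with hseq
    have htend : Filter.Tendsto seq Filter.atTop (nhds a) := by
      rw [tendsto_pi_nhds]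
      intro i
      fin_cases i
      · have hcont : Continuous fun t : ℝ => a 0 + (t:ℂ) • C := by
          apply Continuous.add continuous_const
          exact (Complex.continuous_ofReal).smul continuous_const
        have := (hcont.tendsto 0).comp hts0
        simpa [hseq, Function.comp_def] using this
      · have hcont : Continuous fun t : ℝ => a 1 + (t:ℂ) • D := by
          apply Continuous.add continuous_const
          exact (Complex.continuous_ofReal).smul continuous_const
        have := (hcont.tendsto 0).comp hts0
        simpa [hseq, Function.comp_def] using this
    refine mem_closure_of_tendsto htend (Filter.Eventually.of_forall fun m => ?_)
    have htm : ts m ∉ Bad := (hts m).2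
    constructor
    · intro i
      fin_cases i
      · exact hsa0 (ts m)
      · exact hsa1 (ts m)
    · -- generation
      rw [MatGenerates]
      have hrange : Set.range (seq m) = {a 0 + (ts m : ℂ) • C, a 1 + (ts m : ℂ) • D} :=
        range_fin2 _ _
      rw [hrange, key1 (ts m), key2 (ts m)]
      rw [adjoin_conj U hUmem _ _ ?_]
      · exact top_closure_eq
      -- apply the core generation lemma
      refine core_gen _ ?_ ?_ _ ?_
      · intro i j hij
        have hij' : ((lam i + ts m * ((i : ℕ) + 1) : ℝ) : ℂ)
            = ((lam j + ts m * ((j : ℕ) + 1) : ℝ) : ℂ) := hij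
        have h1 : lam i + ts m * ((i : ℕ) + 1) = lam j + ts m * ((j : ℕ) + 1) := by
          exact_mod_cast hij'
        by_contra hne
        exact htm (Or.inl (Or.inl (Set.mem_iUnion.mpr ⟨(i, j), hne, h1⟩)))
      · intro i hi
        have hi' : ((lam i + ts m * ((i : ℕ) + 1) : ℝ) : ℂ) = 0 := hi
        have h1 : lam i + ts m * ((i : ℕ) + 1) = 0 := by exact_mod_cast hi'
        exact htm (Or.inl (Or.inr (Set.mem_iUnion.mpr ⟨i, h1⟩)))
      · intro m' h hzero
        apply htm
        refine Or.inr (Set.mem_iUnion.mpr ⟨(⟨m', by omega⟩, ⟨m' + 1, h⟩), ?_⟩)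
        simp only [Set.mem_setOf_eq]
        have hT0e : T0 (⟨m', by omega⟩ : Fin n) ⟨m' + 1, h⟩ = 1 := by
          simp [hT0]
        rw [Matrix.add_apply, Matrix.smul_apply, hT0e, smul_eq_mul, mul_one] at hzero
        exact hzero
  · -- a single self-adjoint matrix never generates
    ext a
    simp only [Set.mem_setOf_eq, Set.mem_empty_iff_false, iff_false, not_and]
    intro hsa hgen
    set T := NonUnitalStarAlgebra.adjoin ℂ (Set.range a) with hT
    have hclosed : IsClosed (T : Set (Matrix (Fin n) (Fin n) ℂ)) := by
      have : (T : Set (Matrix (Fin n) (Fin n) ℂ))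
          = (T.toNonUnitalSubalgebra.toSubmodule : Set _) := rfl
      rw [this]
      exact Submodule.closed_of_finiteDimensional _
    have hTtop : ∀ x : Matrix (Fin n) (Fin n) ℂ, x ∈ T := by
      intro x
      have hx : x ∈ T.topologicalClosure := hgen ▸ trivial
      have : x ∈ closure (T : Set (Matrix (Fin n) (Fin n) ℂ)) := hx
      rwa [hclosed.closure_eq] at this
    have hr : Set.range a = {a 0} := by
      ext x; simp [Set.range_unique]
    haveI : IsStarNormal (a 0) := (hsa 0).isStarNormal
    have hcomm : ∀ x ∈ T, ∀ y ∈ T, Commute x y := by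
      intro x hx y hy
      rw [hT, hr] at hy hx
      refine NonUnitalStarAlgebra.commute_of_mem_adjoin_of_forall_mem_commute hy ?_ ?_
      · rintro b rfl
        exact (NonUnitalStarAlgebra.commute_of_mem_adjoin_self hx).symm
      · rintro b rfl
        rw [(hsa 0).star_eq]
        exact (NonUnitalStarAlgebra.commute_of_mem_adjoin_self hx).symm
    have h0 : (0 : ℕ) < n := by omega
    have h1 : (1 : ℕ) < n := by omega
    have hc := hcomm (Matrix.single ⟨0, h0⟩ ⟨1, h1⟩ (1:ℂ)) (hTtop _)
      (Matrix.single ⟨1, h1⟩ ⟨0, h0⟩ (1:ℂ)) (hTtop _)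
    rw [Commute, SemiconjBy, Matrix.single_mul_single_same, Matrix.single_mul_single_same] at hc
    have := Matrix.ext_iff.mpr hc ⟨0, h0⟩ ⟨0, h0⟩
    simp [Matrix.single, Fin.ext_iff] at this
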